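/- arXiv:2208.02073 — 11 statements merged into one kernel-verified Lean document; each statement's English description precedes it below -/
import Mathlib

section
/- Let σ, λ, ψ > 0 and let c ∈ ℝ² be arbitrary. Then the piecewise-linear system in (x, z) ∈ ℝ² given by x + σψ·z·𝟙{z > 0} = c₁ and −λx + z = c₂ has a unique solution. (Coherence and completeness of the temporary equilibrium.) -/
/-- For σ, λ, ψ > 0 and any c ∈ ℝ², the piecewise-linear system
x + σψ·z·𝟙{z > 0} = c₁, −λx + z = c₂ has a unique solution (coherence and completeness). -/
theorem stmt1 (σ lam ψ : ℝ) (hσ : 0 < σ) (hlam : 0 < lam) (hψ : 0 < ψ) (c₁ c₂ : ℝ) :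
    ∃! xz : ℝ × ℝ,
      xz.1 + σ * ψ * xz.2 * (if 0 < xz.2 then (1:ℝ) else 0) = c₁ ∧
      -lam * xz.1 + xz.2 = c₂ := by
  have hD : (0:ℝ) < 1 + σ * lam * ψ := by positivity
  have hDne : (1 + σ * lam * ψ) ≠ 0 := ne_of_gt hD
  by_cases h : 0 < lam * c₁ + c₂
  · refine ⟨((c₁ - σ * ψ * c₂) / (1 + σ * lam * ψ), (lam * c₁ + c₂) / (1 + σ * lam * ψ)), ?_, ?_⟩
    · have hz : 0 < (lam * c₁ + c₂) / (1 + σ * lam * ψ) := div_pos h hD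
      constructor
      · simp only [hz, if_pos]
        field_simp
        ring
      · field_simp
        ring
    · rintro ⟨x, z⟩ ⟨h1, h2⟩
      simp only at h1 h2
      by_cases hz : 0 < z
      · simp only [hz, if_pos, mul_one] at h1
        have hx : x = (c₁ - σ * ψ * c₂) / (1 + σ * lam * ψ) := by
          field_simp; nlinarith
        have hzz : z = (lam * c₁ + c₂) / (1 + σ * lam * ψ) := by
          field_simp; nlinarith
        simp [hx, hzz]
      · simp only [if_neg hz, mul_zero, add_zero] at h1
        exfalso
        have : z = lam * c₁ + c₂ := by nlinarith
        exact hz (this ▸ h)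
  · refine ⟨(c₁, lam * c₁ + c₂), ?_, ?_⟩
    · constructor
      · rw [if_neg h]; ring
      · simp
    · rintro ⟨x, z⟩ ⟨h1, h2⟩
      simp only at h1 h2
      by_cases hz : 0 < z
      · exfalso
        simp only [hz, if_pos, mul_one] at h1
        have hzz : z = (lam * c₁ + c₂) / (1 + σ * lam * ψ) := by
          field_simp; nlinarith
        have : z ≤ 0 := by
          rw [hzz]
          exact div_nonpos_of_nonpos_of_nonneg (not_lt.mp h) (le_of_lt hD)
        linarith
      · simp only [if_neg hz, mul_zero, add_zero] at h1
        have : z = lam * c₁ + c₂ := by nlinarith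
        simp [h1, this]
end

section
/- Let β ∈ (0,1), λ, σ, μ > 0, ψ > 1, p ∈ (0,1). If p·ν(p) > 1 where ν(p) = 1 + λσ/(1 − βp), then the ZLB-regime output x = (σμ + ε₁)/(1 − p·ν(p)) is strictly decreasing in ε₁, and there exists a threshold ε̄ such that for all ε₁ < ε̄ the ZLB consistency condition ψ·(λ/(1−βp))·x ≤ −μ fails; hence no ZLB rational expectations solution exists for sufficiently negative ε₁. -/
/-- If p·ν(p) > 1, ZLB-regime output x = (σμ+ε₁)/(1−pν(p)) is strictly
decreasing in ε₁, and there is a threshold ε̄ below which the ZLB consistency condition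
ψ·(λ/(1−βp))·x ≤ −μ fails: no ZLB REE for sufficiently negative shocks. -/
theorem stmt3 (β lam σ μ ψ p : ℝ) (hβ0 : 0 < β) (hβ1 : β < 1) (hlam : 0 < lam)
    (hσ : 0 < σ) (hμ : 0 < μ) (hψ : 1 < ψ) (hp0 : 0 < p) (hp1 : p < 1)
    (ν : ℝ → ℝ) (hν : ∀ s, ν s = 1 + lam * σ / (1 - β * s))
    (hpν : 1 < p * ν p) :
    StrictAnti (fun ε₁ : ℝ => (σ * μ + ε₁) / (1 - p * ν p)) ∧
    (∃ εbar : ℝ, ∀ ε₁ < εbar,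
      ¬ (ψ * (lam / (1 - β * p)) * ((σ * μ + ε₁) / (1 - p * ν p)) ≤ -μ)) := by
  have hD : 1 - p * ν p < 0 := by linarith
  have hbp : 0 < 1 - β * p := by nlinarith
  constructor
  · intro a b hab
    simp only
    exact (div_lt_div_right_of_neg hD).mpr (by linarith)
  · refine ⟨-(σ * μ), fun ε₁ hε => ?_⟩
    have hx : 0 < (σ * μ + ε₁) / (1 - p * ν p) :=
      div_pos_of_neg_of_neg (by linarith) hD
    have hc : 0 < ψ * (lam / (1 - β * p)) :=
      mul_pos (by linarith) (div_pos hlam hbp)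
    nlinarith [mul_pos hc hx]
end

section
/- Let 0 < M, M_f ≤ 1, 0 < N ≤ 1, β ∈ (0,1), λ, σ > 0, and define the 2×2 matrix A = [[M, σN], [Mλ, M_f β + λσN]]. Then both eigenvalues of A lie strictly inside the unit circle (spectral radius < 1) if and only if (M − 1)(1 − M_f β) + λσN < 0. -/
lemma key_quad (T D : ℝ) (hT : 0 < T) (hD0 : 0 < D) (hD1 : D < 1) :
    (∀ z : ℂ, z^2 - (T:ℂ)*z + (D:ℂ) = 0 → ‖z‖ < 1) ↔ T < 1 + D := by
  constructor
  · intro h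
    by_cases hΔ : 0 ≤ T^2 - 4*D
    · set s := Real.sqrt (T^2 - 4*D) with hs
      have hs0 : 0 ≤ s := Real.sqrt_nonneg _
      have hs2 : s^2 = T^2 - 4*D := Real.sq_sqrt hΔ
      have hr : ((T+s)/2)^2 - T*((T+s)/2) + D = 0 := by nlinarith [hs2]
      have hx2 : (((T+s)/2 : ℝ) : ℂ)^2 - (T:ℂ)*(((T+s)/2 : ℝ):ℂ) + (D:ℂ) = 0 := by
        exact_mod_cast hr
      have habs := h _ hx2
      rw [Complex.norm_real, Real.norm_eq_abs] at habs
      have h2 : (T+s)/2 < 1 := lt_of_le_of_lt (le_abs_self _) habs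
      nlinarith [hs2, mul_pos (by linarith : (0:ℝ) < 1 - (T-s)/2) (by linarith : (0:ℝ) < 1 - (T+s)/2)]
    · push_neg at hΔ
      nlinarith [sq_nonneg (1 - D), sq_nonneg T]
  · intro hTD z hz
    set x := z.re with hx
    set y := z.im with hy
    have hzre := congrArg Complex.re hz
    have hzim := congrArg Complex.im hz
    simp [pow_two, Complex.mul_re, Complex.mul_im, Complex.add_re, Complex.add_im,
      Complex.sub_re, Complex.sub_im, Complex.ofReal_re, Complex.ofReal_im] at hzre hzim
    have habs2 : ‖z‖^2 = x^2 + y^2 := by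
      rw [Complex.sq_norm, Complex.normSq_apply]; ring
    have hgoal : x^2 + y^2 < 1 → ‖z‖ < 1 := by
      intro hlt
      nlinarith [norm_nonneg z, habs2]
    apply hgoal
    rcases mul_eq_zero.mp (show y * (2*x - T) = 0 by nlinarith [hzim]) with h0 | h0
    · have e1 : x^2 - T*x + D = 0 := by nlinarith [hzre, h0]
      have hx0 : 0 < x := by nlinarith [e1, sq_nonneg x]
      have hx1 : x < 1 := by
        by_contra hge
        push_neg at hge
        nlinarith [e1, mul_pos hD0 (by linarith : (0:ℝ) < x)]
      nlinarith [h0]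
    · have e1 : y^2 = D - x^2 := by nlinarith [hzre, h0]
      nlinarith [e1]

/-- For A = [[M, σN],[Mλ, M_fβ + λσN]], both (complex) eigenvalues of A lie
strictly inside the unit circle iff (M − 1)(1 − M_f β) + λσN < 0. -/
theorem stmt5 (M Mf N β lam σ : ℝ)
    (hM : 0 < M ∧ M ≤ 1) (hMf : 0 < Mf ∧ Mf ≤ 1) (hN : 0 < N ∧ N ≤ 1)
    (hβ0 : 0 < β) (hβ1 : β < 1) (hlam : 0 < lam) (hσ : 0 < σ) :
    (∀ z : ℂ,
        ((!![M, σ * N; M * lam, Mf * β + lam * σ * N] :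
          Matrix (Fin 2) (Fin 2) ℝ).map (algebraMap ℝ ℂ)).charpoly.IsRoot z →
        ‖z‖ < 1) ↔
      (M - 1) * (1 - Mf * β) + lam * σ * N < 0 := by
  obtain ⟨hM0, hM1⟩ := hM
  obtain ⟨hMf0, hMf1⟩ := hMf
  obtain ⟨hN0, hN1⟩ := hN
  have hTpos : 0 < M + (Mf * β + lam * σ * N) := by positivity
  have hDpos : 0 < M * (Mf * β) := by positivity
  have hD1 : M * (Mf * β) < 1 := by
    have h1 : Mf * β < 1 := by nlinarith
    nlinarith
  have hiff : ∀ z : ℂ,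
      ((!![M, σ * N; M * lam, Mf * β + lam * σ * N] :
        Matrix (Fin 2) (Fin 2) ℝ).map (algebraMap ℝ ℂ)).charpoly.IsRoot z ↔
      z^2 - ((M + (Mf * β + lam * σ * N) : ℝ):ℂ)*z + ((M * (Mf * β) : ℝ):ℂ) = 0 := by
    intro z
    rw [Matrix.charpoly, Matrix.det_fin_two]
    simp [Matrix.charmatrix_apply_eq, Matrix.charmatrix_apply_ne, Polynomial.IsRoot]
    constructor
    · intro h
      linear_combination h
    · intro h
      push_cast at h
      linear_combination h
  rw [show ((M - 1) * (1 - Mf * β) + lam * σ * N < 0) ↔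
        (M + (Mf * β + lam * σ * N) < 1 + M * (Mf * β)) by
      constructor <;> intro h <;> nlinarith]
  rw [← key_quad _ _ hTpos hDpos hD1]
  exact forall_congr' fun z => by rw [hiff z]
end

section
/- Let λ, σ > 0, β ∈ (0,1), ψ > 0, and define A_P = (1/(1+λσψ))·[[1, σ − βσψ], [λ, β + λσ]]. Then both eigenvalues of A_P − I have strictly negative real parts whenever ψ > 1. (E-stability of the PP restricted perceptions equilibrium.) -/
lemma aux (b c : ℝ) (hb : 0 < b) (hc : 0 < c) (z : ℂ)
    (h : z ^ 2 + (b : ℂ) * z + (c : ℂ) = 0) : z.re < 0 := by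
  have him : z.im * (2 * z.re + b) = 0 := by
    have := congrArg Complex.im h
    simp [Complex.add_im, Complex.mul_im, pow_two, Complex.mul_re] at this
    ring_nf at this ⊢
    linarith
  have hre : z.re ^ 2 - z.im ^ 2 + b * z.re + c = 0 := by
    have := congrArg Complex.re h
    simp [Complex.add_re, Complex.mul_re, pow_two, Complex.mul_im] at this
    ring_nf at this ⊢
    linarith
  rcases mul_eq_zero.1 him with h0 | h0
  · by_contra hge
    push_neg at hge
    nlinarith
  · nlinarith

/-- With A_P = (1/(1+λσψ))·[[1, σ−βσψ],[λ, β+λσ]], all eigenvalues of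
A_P − I have strictly negative real parts whenever ψ > 1 (E-stability of the PP RPE). -/
theorem stmt6 (lam σ β ψ : ℝ) (hlam : 0 < lam) (hσ : 0 < σ)
    (hβ0 : 0 < β) (hβ1 : β < 1) (hψ : 1 < ψ)
    (AP : Matrix (Fin 2) (Fin 2) ℝ)
    (hAP : AP = (1 / (1 + lam * σ * ψ)) • !![1, σ - β * σ * ψ; lam, β + lam * σ]) :
    ∀ z : ℂ, (((AP - 1).map (algebraMap ℝ ℂ)).charpoly).IsRoot z → z.re < 0 := by
  intro z hz
  have hD : 0 < 1 + lam * σ * ψ := by positivity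
  set M : Matrix (Fin 2) (Fin 2) ℝ := AP - 1 with hM
  rw [Matrix.charpoly_map] at hz
  have hcp : M.charpoly = Polynomial.X ^ 2 - Polynomial.C M.trace * Polynomial.X
      + Polynomial.C M.det := by
    rw [Matrix.charpoly, Matrix.det_fin_two]
    simp [Matrix.charmatrix_apply_eq, Matrix.charmatrix_apply_ne, Matrix.trace_fin_two,
      Matrix.det_fin_two]
    ring
  have ht : M.trace = (β - 1 + lam * σ - 2 * (lam * σ * ψ)) / (1 + lam * σ * ψ) := by
    simp [hM, hAP, Matrix.trace_fin_two, Matrix.smul_apply, Matrix.sub_apply, Matrix.one_apply]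
    field_simp
    ring
  have hd : M.det = lam * σ * (ψ - 1) / (1 + lam * σ * ψ) := by
    simp [hM, hAP, Matrix.det_fin_two, Matrix.smul_apply, Matrix.sub_apply, Matrix.one_apply]
    field_simp
    ring
  have heq : z ^ 2 + ((-M.trace : ℝ) : ℂ) * z + ((M.det : ℝ) : ℂ) = 0 := by
    have := hz
    rw [hcp] at this
    simp [Polynomial.IsRoot, Polynomial.eval_map, Polynomial.eval₂_sub, Polynomial.eval₂_add] at this
    push_cast
    ring_nf
    ring_nf at this
    linear_combination this
  refine aux (-M.trace) M.det ?_ ?_ z heq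
  · rw [ht, ← neg_div]
    apply div_pos _ hD
    nlinarith [mul_pos hlam hσ, mul_pos (mul_pos hlam hσ) (sub_pos.2 hψ)]
  · rw [hd]
    apply div_pos _ hD
    nlinarith [mul_pos hlam hσ, mul_pos (mul_pos hlam hσ) (sub_pos.2 hψ)]
end

section
/- Let λ, σ > 0 and β ∈ (0,1), and define A_Z = [[1, σ], [λ, β + λσ]]. Then A_Z − I has at least one eigenvalue with strictly positive real part; consequently the ZZ restricted perceptions equilibrium is never E-stable. -/
/-- With A_Z = [[1, σ],[λ, β+λσ]], the matrix A_Z − I has an eigenvalue with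
strictly positive real part, so the ZZ restricted perceptions equilibrium is never E-stable. -/
theorem stmt7 (lam σ β : ℝ) (hlam : 0 < lam) (hσ : 0 < σ) (hβ0 : 0 < β) (hβ1 : β < 1)
    (AZ : Matrix (Fin 2) (Fin 2) ℝ)
    (hAZ : AZ = !![1, σ; lam, β + lam * σ]) :
    ∃ z : ℂ, (((AZ - 1).map (algebraMap ℝ ℂ)).charpoly).IsRoot z ∧ 0 < z.re := by
  set t : ℝ := β + lam * σ - 1 with ht
  set r : ℝ := Real.sqrt (t ^ 2 + 4 * (lam * σ)) with hr
  have hr2 : r ^ 2 = t ^ 2 + 4 * (lam * σ) := by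
    rw [hr]
    exact Real.sq_sqrt (by positivity)
  have hrt : |t| < r := by
    have : t ^ 2 < r ^ 2 := by rw [hr2]; nlinarith
    have hrnn : 0 ≤ r := Real.sqrt_nonneg _
    nlinarith [abs_nonneg t, sq_abs t]
  set z : ℝ := (t + r) / 2 with hz
  have hzpos : 0 < z := by
    have := neg_abs_le t
    rw [hz]; nlinarith
  have hzeq : z ^ 2 - t * z - lam * σ = 0 := by
    have : z ^ 2 - t * z = (r ^ 2 - t ^ 2) / 4 := by rw [hz]; ring
    rw [this, hr2]; ring
  refine ⟨(z : ℂ), ?_, by simpa using hzpos⟩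
  set M : Matrix (Fin 2) (Fin 2) ℂ := (AZ - 1).map (algebraMap ℝ ℂ) with hM
  have hMeq : M = !![(0 : ℂ), (σ : ℝ); (lam : ℝ), (t : ℝ)] := by
    rw [hM, hAZ]
    ext i j
    fin_cases i <;> fin_cases j <;>
      simp [Matrix.map_apply, Matrix.one_apply, ht, Complex.ofReal_sub,
        Complex.ofReal_add, Complex.ofReal_mul, Complex.ofReal_one] <;> push_cast <;> ring
  have hcp : M.charpoly =
      (Polynomial.X - Polynomial.C (0 : ℂ)) * (Polynomial.X - Polynomial.C (t : ℂ))
        - (- Polynomial.C ((σ : ℝ) : ℂ)) * (- Polynomial.C ((lam : ℝ) : ℂ)) := by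
    rw [Matrix.charpoly, Matrix.det_fin_two]
    rw [hMeq]
    rw [Matrix.charmatrix_apply_eq, Matrix.charmatrix_apply_eq,
      Matrix.charmatrix_apply_ne _ _ _ (by decide), Matrix.charmatrix_apply_ne _ _ _ (by decide)]
    simp [Matrix.cons_val_zero, Matrix.cons_val_one]
  rw [hcp]
  simp only [Polynomial.IsRoot, Polynomial.eval_sub, Polynomial.eval_mul, Polynomial.eval_neg,
    Polynomial.eval_X, Polynomial.eval_C]
  have : ((z : ℂ) - 0) * ((z : ℂ) - (t : ℂ)) - (-(σ : ℂ)) * (-(lam : ℂ))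
      = ((z ^ 2 - t * z - lam * σ : ℝ) : ℂ) := by push_cast; ring
  rw [this, hzeq, Complex.ofReal_zero]
end

section
/- Let λ, σ > 0, β ∈ (0,1), ψ > 1, q̄ ∈ [0,1], a := λσ, and define A_P = (1/(1+aψ))·[[1, σ − βσψ],[λ, β + a]] and A_Z = [[1, σ],[λ, β + a]]. Set B = q̄·A_P + (1−q̄)·A_Z. Then tr(B − I) < 0 and det(B − I) > 0 hold simultaneously if and only if q̄(1 + a)ψ − 1 − aψ > 0. -/
/-- For B = q̄·A_P + (1−q̄)·A_Z, the E-stability conditions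
tr(B−I) < 0 and det(B−I) > 0 hold simultaneously iff q̄(1+a)ψ − 1 − aψ > 0. -/
theorem stmt8 (lam σ β ψ qbar : ℝ) (hlam : 0 < lam) (hσ : 0 < σ)
    (hβ0 : 0 < β) (hβ1 : β < 1) (hψ : 1 < ψ) (hq : qbar ∈ Set.Icc (0:ℝ) 1)
    (a : ℝ) (ha : a = lam * σ)
    (AP AZ B : Matrix (Fin 2) (Fin 2) ℝ)
    (hAP : AP = (1 / (1 + a * ψ)) • !![1, σ - β * σ * ψ; lam, β + a])
    (hAZ : AZ = !![1, σ; lam, β + a])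
    (hB : B = qbar • AP + (1 - qbar) • AZ) :
    ((B - 1).trace < 0 ∧ 0 < (B - 1).det) ↔ 0 < qbar * (1 + a) * ψ - 1 - a * ψ := by
  obtain ⟨hq0, hq1⟩ := hq
  have ha0 : 0 < a := by rw [ha]; positivity
  have hden : 0 < 1 + a * ψ := by positivity
  have hden' : (1 + a * ψ) ≠ 0 := ne_of_gt hden
  have hd : (B - 1).det =
      (a * (qbar * (1 + a) * ψ - 1 - a * ψ)) / (1 + a * ψ) := by
    subst hB hAP hAZ ha
    simp only [Matrix.det_fin_two, Matrix.sub_apply, Matrix.add_apply,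
      Matrix.smul_apply, Matrix.one_apply, Matrix.cons_val', Matrix.cons_val_zero,
      Matrix.cons_val_one, Matrix.head_cons, Matrix.head_fin_const,
      Matrix.empty_val', Matrix.cons_val_fin_one, smul_eq_mul,
      Matrix.of_apply, one_ne_zero, zero_ne_one, ↓reduceIte]
    field_simp
    ring
  have ht : (B - 1).trace =
      ((1 + a * ψ - qbar * a * ψ) * (1 + β + a) - 2 * (1 + a * ψ)) / (1 + a * ψ) := by
    subst hB hAP hAZ ha
    simp only [Matrix.trace_fin_two, Matrix.sub_apply, Matrix.add_apply,
      Matrix.smul_apply, Matrix.one_apply, Matrix.cons_val', Matrix.cons_val_zero,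
      Matrix.cons_val_one, Matrix.head_cons, Matrix.head_fin_const,
      Matrix.empty_val', Matrix.cons_val_fin_one, smul_eq_mul, if_pos rfl,
      Matrix.of_apply, one_ne_zero, zero_ne_one, ↓reduceIte]
    field_simp
    ring
  rw [hd, ht]
  constructor
  · rintro ⟨-, h2⟩
    have := (div_pos_iff.mp h2)
    rcases this with ⟨h, _⟩ | ⟨_, h⟩
    · nlinarith
    · linarith
  · intro h
    refine ⟨?_, by positivity⟩
    apply div_neg_of_neg_of_pos _ hden
    -- from h : qbar*(1+a)*ψ > 1 + a*ψ, get (1+a*ψ-qbar*a*ψ)*(1+a) < 1+a*ψ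
    have key : (1 + a * ψ - qbar * a * ψ) * (1 + a) < 1 + a * ψ := by nlinarith
    have hpos : 0 < 1 + a * ψ - qbar * a * ψ := by nlinarith [mul_nonneg (mul_nonneg (sub_nonneg.mpr hq1) ha0.le) (by linarith : (0:ℝ) ≤ ψ)]
    nlinarith [mul_pos hpos (sub_pos.mpr hβ1)]
end

section
/- Let λ, σ > 0, β ∈ (0,1), ψ > 1, q̄ ∈ [0,1], a := λσ, and define C = (1−q̄)·A_P + q̄·A_Z with A_P, A_Z as in the New Keynesian regime maps. Then the E-stability condition tr(C − I) < 0 and det(C − I) > 0 holds if and only if ψ − 1 − q̄ψ(1 + a) > 0; in particular, since ψ − 1 − q̄ψ(1+a) > 0 contradicts the existence condition ψ − 1 − q̄ψ(1+a) < 0 for the PZ restricted perceptions equilibrium, the PZ RPE is never E-stable. -/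
private lemma stmt9_aux (lam σ β ψ qbar t d : ℝ) (hlam : 0 < lam) (hσ : 0 < σ)
    (hβ0 : 0 < β) (hβ1 : β < 1) (hψ : 1 < ψ) (hq0 : 0 ≤ qbar) (hq1 : qbar ≤ 1)
    (htr : t * (1 + lam * σ * ψ)
      = β - 1 + lam * σ + lam * σ * ψ * (qbar * (1 + β + lam * σ) - 2))
    (hdet : d * ((1 + lam * σ * ψ) * (1 + lam * σ * ψ))
      = lam * σ * (1 + lam * σ * ψ) * (ψ - 1 - qbar * ψ * (1 + lam * σ))) :
    ((t < 0 ∧ 0 < d) ↔ 0 < ψ - 1 - qbar * ψ * (1 + lam * σ)) ∧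
    ¬ ((t < 0 ∧ 0 < d) ∧ ψ - 1 - qbar * ψ * (1 + lam * σ) < 0) := by
  have hψ0 : 0 < ψ := by linarith
  have hD : 0 < 1 + lam * σ * ψ := by positivity
  have ha0 : 0 < lam * σ := mul_pos hlam hσ
  have hiff : (t < 0 ∧ 0 < d) ↔ 0 < ψ - 1 - qbar * ψ * (1 + lam * σ) := by
    constructor
    · rintro ⟨_, hdpos⟩
      nlinarith [mul_pos hdpos (mul_pos hD hD), mul_pos ha0 hD]
    · intro hE
      constructor
      · have h1 : qbar * ψ * (1 + lam * σ) < ψ - 1 := by linarith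
        have h2 : lam * σ * ψ * qbar * (1 + lam * σ) ≤ lam * σ * (ψ - 1) := by
          nlinarith
        have h3 : qbar * ψ ≤ ψ - 1 := by nlinarith
        have h3b : qbar * ψ * β ≤ ψ - 1 := by nlinarith [mul_nonneg hq0 hψ0.le]
        have h4 : lam * σ * ψ * qbar * β ≤ lam * σ * (ψ - 1) := by
          nlinarith [mul_le_mul_of_nonneg_left h3b ha0.le]
        have htrneg : t * (1 + lam * σ * ψ) < 0 := by
          rw [htr]; nlinarith
        nlinarith
      · have h : 0 < lam * σ * (1 + lam * σ * ψ) * (ψ - 1 - qbar * ψ * (1 + lam * σ)) := by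
          positivity
        nlinarith [h, hdet, mul_pos hD hD]
  exact ⟨hiff, by rintro ⟨hcond, hE⟩; have := hiff.mp hcond; linarith⟩

/-- For C = (1−q̄)·A_P + q̄·A_Z, the E-stability conditions tr(C−I) < 0 and
det(C−I) > 0 hold iff ψ − 1 − q̄ψ(1+a) > 0; hence, since the PZ RPE exists only when
ψ − 1 − q̄ψ(1+a) < 0, an E-stable PZ RPE is impossible. -/
theorem stmt9 (lam σ β ψ qbar : ℝ) (hlam : 0 < lam) (hσ : 0 < σ)
    (hβ0 : 0 < β) (hβ1 : β < 1) (hψ : 1 < ψ) (hq : qbar ∈ Set.Icc (0:ℝ) 1)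
    (a : ℝ) (ha : a = lam * σ)
    (AP AZ C : Matrix (Fin 2) (Fin 2) ℝ)
    (hAP : AP = (1 / (1 + a * ψ)) • !![1, σ - β * σ * ψ; lam, β + a])
    (hAZ : AZ = !![1, σ; lam, β + a])
    (hC : C = (1 - qbar) • AP + qbar • AZ) :
    (((C - 1).trace < 0 ∧ 0 < (C - 1).det) ↔ 0 < ψ - 1 - qbar * ψ * (1 + a)) ∧
    ¬ (((C - 1).trace < 0 ∧ 0 < (C - 1).det) ∧ ψ - 1 - qbar * ψ * (1 + a) < 0) := by
  obtain ⟨hq0, hq1⟩ := hq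
  have hD : 0 < 1 + lam * σ * ψ := by positivity
  have hDne : (1 + lam * σ * ψ) ≠ 0 := ne_of_gt hD
  subst ha hAP hAZ hC
  have htr : (( (1 - qbar) • ((1 / (1 + lam * σ * ψ)) • !![1, σ - β * σ * ψ; lam, β + lam * σ])
      + qbar • !![1, σ; lam, β + lam * σ] - 1 : Matrix (Fin 2) (Fin 2) ℝ)).trace
      * (1 + lam * σ * ψ)
      = β - 1 + lam * σ + lam * σ * ψ * (qbar * (1 + β + lam * σ) - 2) := by
    simp [Matrix.trace_fin_two, Matrix.smul_apply, Matrix.sub_apply, Matrix.one_apply]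
    field_simp
    ring
  have hdet : (( (1 - qbar) • ((1 / (1 + lam * σ * ψ)) • !![1, σ - β * σ * ψ; lam, β + lam * σ])
      + qbar • !![1, σ; lam, β + lam * σ] - 1 : Matrix (Fin 2) (Fin 2) ℝ)).det
      * ((1 + lam * σ * ψ) * (1 + lam * σ * ψ))
      = lam * σ * (1 + lam * σ * ψ) * (ψ - 1 - qbar * ψ * (1 + lam * σ)) := by
    simp [Matrix.det_fin_two, Matrix.smul_apply, Matrix.sub_apply, Matrix.one_apply]
    field_simp
    ring
  exact stmt9_aux lam σ β ψ qbar _ _ hlam hσ hβ0 hβ1 hψ hq0 hq1 htr hdet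
end

section
/- Let λ, σ > 0, ψ > 1, β ∈ (0,1), σ_ε > 0, μ > 0. Define L(a) = (σ_ε λ)^{-1}(−μ/ψ − (1+λσ)a − λσμ) and h(a) = ((1+λσ)/(1+λσψ))·a + Φ(L(a))·(((1+λσ)λσψ/(1+λσψ))·a + λσμ) − φ(L(a))·λ²σ_ε σψ/(1+λσψ), where Φ and φ are the standard normal CDF and PDF. Then h'(a) − 1 = λσ(1−ψ)/(1+λσψ) + Φ(L(a))·λσψ(1+λσ)/(1+λσψ), this expression is strictly decreasing in a, and there is a unique a* with h'(a*) = 1; consequently the equation h(a) = a has at most two solutions, and it has (exactly two) solutions if and only if h(a*) ≥ a* (with two distinct solutions when h(a*) > a*). -/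
open Set MeasureTheory Filter Topology

set_option maxHeartbeats 1000000 in
/-- For the RPE mean map h with Gaussian shocks, h'(a) − 1 =
λσ(1−ψ)/(1+λσψ) + Φ(L(a))·λσψ(1+λσ)/(1+λσψ); this is strictly decreasing in a, there is a
unique a* with h'(a*) = 1, the fixed-point equation h(a) = a has at most two solutions,
it has a solution iff h(a*) ≥ a*, and two distinct solutions when h(a*) > a*. -/
theorem stmt14 (lam σ ψ β σε μ : ℝ) (hlam : 0 < lam) (hσ : 0 < σ) (hψ : 1 < ψ)
    (hβ0 : 0 < β) (hβ1 : β < 1) (hσε : 0 < σε) (hμ : 0 < μ)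
    (φf Φf L h g : ℝ → ℝ)
    (hφ : ∀ x, φf x = Real.exp (-x ^ 2 / 2) / Real.sqrt (2 * Real.pi))
    (hΦ : ∀ x, Φf x = ∫ t in Set.Iic x, φf t)
    (hL : ∀ a, L a = (σε * lam)⁻¹ * (-μ / ψ - (1 + lam * σ) * a - lam * σ * μ))
    (hh : ∀ a, h a = (1 + lam * σ) / (1 + lam * σ * ψ) * a
      + Φf (L a) * ((1 + lam * σ) * lam * σ * ψ / (1 + lam * σ * ψ) * a + lam * σ * μ)
      - φf (L a) * lam ^ 2 * σε * σ * ψ / (1 + lam * σ * ψ))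
    (hg : ∀ a, g a = lam * σ * (1 - ψ) / (1 + lam * σ * ψ)
      + Φf (L a) * (lam * σ * ψ * (1 + lam * σ) / (1 + lam * σ * ψ))) :
    (∀ a, HasDerivAt h (1 + g a) a) ∧
    StrictAnti g ∧
    (∃! astar : ℝ, g astar = 0) ∧
    (∀ astar : ℝ, g astar = 0 →
      ({x : ℝ | h x = x}.Finite ∧ {x : ℝ | h x = x}.ncard ≤ 2) ∧
      ((∃ x : ℝ, h x = x) ↔ astar ≤ h astar) ∧
      (astar < h astar → ∃ x y : ℝ, x ≠ y ∧ h x = x ∧ h y = y)) := by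
  have hψ0 : (0:ℝ) < ψ := lt_trans one_pos hψ
  have hls : (0:ℝ) < lam * σ := mul_pos hlam hσ
  have hden : (0:ℝ) < 1 + lam * σ * ψ := by nlinarith
  have h1ls : (0:ℝ) < 1 + lam * σ := by linarith
  have hsl : (0:ℝ) < σε * lam := mul_pos hσε hlam
  have hslinv : (0:ℝ) < (σε * lam)⁻¹ := inv_pos.2 hsl
  have hsq : (0:ℝ) < Real.sqrt (2 * Real.pi) := Real.sqrt_pos.2 (by positivity)
  set pdf : ℝ → ℝ := fun x => Real.exp (-x ^ 2 / 2) / Real.sqrt (2 * Real.pi) with hpdf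
  have hpdf_cont : Continuous pdf := by
    exact (Real.continuous_exp.comp (by continuity)).div_const _
  have hpdf_pos : ∀ x, 0 < pdf x := fun x => div_pos (Real.exp_pos _) hsq
  have hpdf_int : Integrable pdf := by
    have h1 : Integrable fun x : ℝ => Real.exp (-(1/2 : ℝ) * x ^ 2) :=
      integrable_exp_neg_mul_sq (by norm_num)
    have h2 := h1.div_const (Real.sqrt (2 * Real.pi))
    refine h2.congr (Filter.Eventually.of_forall fun x => ?_)
    simp only [hpdf]; ring_nf
  have hpdf_total : ∫ x, pdf x = 1 := by
    have h1 : ∫ x : ℝ, Real.exp (-(1/2 : ℝ) * x ^ 2) = Real.sqrt (Real.pi / (1/2)) :=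
      integral_gaussian (1/2)
    have h2 : ∫ x, pdf x = (∫ x : ℝ, Real.exp (-(1/2 : ℝ) * x ^ 2)) / Real.sqrt (2 * Real.pi) := by
      rw [← integral_div]
      refine integral_congr_ae (Filter.Eventually.of_forall fun x => ?_)
      simp only [hpdf]; ring_nf
    rw [h2, h1]
    rw [show Real.pi / (1/2) = 2 * Real.pi by ring]
    exact div_self (ne_of_gt hsq)
  have hΦpdf : ∀ x, Φf x = ∫ t in Iic x, pdf t := by
    intro x; rw [hΦ x]
    exact integral_congr_ae (Filter.Eventually.of_forall fun t => hφ t)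
  -- derivative of Φf
  have hΦkey : ∀ u, Φf u = (∫ t in Iic (0:ℝ), pdf t) + ∫ t in (0:ℝ)..u, pdf t := by
    intro u
    rw [hΦpdf u, ← intervalIntegral.integral_Iic_sub_Iic hpdf_int.integrableOn
      hpdf_int.integrableOn]
    ring
  have hΦderiv : ∀ x, HasDerivAt Φf (pdf x) x := by
    intro x
    have hmain : HasDerivAt (fun u => (∫ t in Iic (0:ℝ), pdf t) + ∫ t in (0:ℝ)..u, pdf t)
        (pdf x) x := by
      have := intervalIntegral.integral_hasDerivAt_right
        (hpdf_int.intervalIntegrable (a := 0) (b := x))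
        (hpdf_cont.stronglyMeasurable.stronglyMeasurableAtFilter)
        hpdf_cont.continuousAt
      exact this.const_add (∫ t in Iic (0:ℝ), pdf t)
    exact hmain.congr_of_eventuallyEq (Filter.Eventually.of_forall fun u => hΦkey u)
  have hΦcont : Continuous Φf := continuous_iff_continuousAt.2 fun x => (hΦderiv x).continuousAt
  -- derivative of φf
  have hφderiv : ∀ x, HasDerivAt φf (-x * φf x) x := by
    intro x
    have d1 : HasDerivAt (fun x : ℝ => -x ^ 2 / 2) (-x) x := by
      have := ((hasDerivAt_pow 2 x).neg).div_const 2
      refine this.congr_deriv ?_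
      norm_num; ring
    have d2 := (d1.exp).div_const (Real.sqrt (2 * Real.pi))
    have : HasDerivAt pdf (-x * pdf x) x := by
      refine d2.congr_deriv ?_
      simp only [hpdf]; ring
    refine (this.congr_of_eventuallyEq (Filter.Eventually.of_forall fun u => hφ u)).congr_deriv ?_
    rw [hφ x]
  -- strict monotonicity of Φf
  have hΦmono : StrictMono Φf := by
    intro x y hxy
    have hdiff : Φf y - Φf x = ∫ t in x..y, pdf t := by
      rw [hΦpdf x, hΦpdf y,
        intervalIntegral.integral_Iic_sub_Iic hpdf_int.integrableOn hpdf_int.integrableOn]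
    have hpos := intervalIntegral.intervalIntegral_pos_of_pos (f := pdf) hpdf_int.intervalIntegrable hpdf_pos hxy
    linarith [hdiff ▸ hpos]
  -- limits of Φf
  have hΦtop : Tendsto Φf atTop (𝓝 1) := by
    have := tendsto_setIntegral_of_monotone (μ := volume) (s := fun r : ℝ => Iic r)
      (f := pdf) (fun _ => measurableSet_Iic) (fun a b hab => Iic_subset_Iic.2 hab)
      (by rw [iUnion_Iic]; exact hpdf_int.integrableOn)
    rw [iUnion_Iic, Measure.restrict_univ, hpdf_total] at this
    exact this.congr fun r => (hΦpdf r).symm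
  have hΦbot : Tendsto Φf atBot (𝓝 0) := by
    have hI : ⋂ r : ℝ, Iic (-r) = ∅ := by
      ext y
      simp only [mem_iInter, mem_Iic, mem_empty_iff_false, iff_false, not_forall]
      exact ⟨1 - y, by linarith⟩
    have := tendsto_setIntegral_of_antitone (μ := volume) (s := fun r : ℝ => Iic (-r))
      (f := pdf) (fun _ => measurableSet_Iic)
      (fun a b hab => Iic_subset_Iic.2 (by linarith)) ⟨0, hpdf_int.integrableOn⟩
    rw [hI] at this
    simp only [Measure.restrict_empty, integral_zero_measure] at this
    have h2 : Tendsto (fun x : ℝ => ∫ t in Iic (-(-x)), pdf t) atBot (𝓝 0) :=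
      this.comp tendsto_neg_atBot_atTop
    refine h2.congr fun x => ?_
    rw [neg_neg, ← hΦpdf x]
  -- derivative of L
  set c0 : ℝ := (σε * lam)⁻¹ * (-(1 + lam * σ)) with hc0
  have hc0neg : c0 < 0 := by
    rw [hc0]; exact mul_neg_of_pos_of_neg hslinv (by linarith)
  have hL' : ∀ a, HasDerivAt L c0 a := by
    intro a
    have h1 : HasDerivAt (fun a : ℝ => (σε * lam)⁻¹ * (-μ / ψ - (1 + lam * σ) * a - lam * σ * μ))
        c0 a := by
      have h2 : HasDerivAt (fun a : ℝ => -μ / ψ - (1 + lam * σ) * a - lam * σ * μ)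
          (-(1 + lam * σ)) a := by
        simpa using (((hasDerivAt_id a).const_mul (1 + lam * σ)).const_sub (-μ / ψ)).sub_const
          (lam * σ * μ)
      simpa [hc0] using h2.const_mul ((σε * lam)⁻¹)
    exact h1.congr_of_eventuallyEq (Filter.Eventually.of_forall fun x => hL x)
  have hLcont : Continuous L := continuous_iff_continuousAt.2 fun x => (hL' x).continuousAt
  -- derivative of h
  have hd : ∀ a, HasDerivAt h (1 + g a) a := by
    intro a
    have hΦL : HasDerivAt (fun a => Φf (L a)) (pdf (L a) * c0) a := by
      have := (hΦderiv (L a)).comp a (hL' a); exact this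
    have hφL : HasDerivAt (fun a => φf (L a)) (-(L a) * φf (L a) * c0) a := by
      have := (hφderiv (L a)).comp a (hL' a); exact this
    have t1 : HasDerivAt (fun a : ℝ => (1 + lam * σ) / (1 + lam * σ * ψ) * a)
        ((1 + lam * σ) / (1 + lam * σ * ψ)) a := by
      simpa using (hasDerivAt_id a).const_mul ((1 + lam * σ) / (1 + lam * σ * ψ))
    have t2 : HasDerivAt (fun a : ℝ => Φf (L a) *
        ((1 + lam * σ) * lam * σ * ψ / (1 + lam * σ * ψ) * a + lam * σ * μ))
        (pdf (L a) * c0 * ((1 + lam * σ) * lam * σ * ψ / (1 + lam * σ * ψ) * a + lam * σ * μ)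
          + Φf (L a) * ((1 + lam * σ) * lam * σ * ψ / (1 + lam * σ * ψ))) a := by
      have tb : HasDerivAt (fun a : ℝ =>
          (1 + lam * σ) * lam * σ * ψ / (1 + lam * σ * ψ) * a + lam * σ * μ)
          ((1 + lam * σ) * lam * σ * ψ / (1 + lam * σ * ψ)) a := by
        simpa using ((hasDerivAt_id a).const_mul
          ((1 + lam * σ) * lam * σ * ψ / (1 + lam * σ * ψ))).add_const (lam * σ * μ)
      exact hΦL.mul tb
    have t3 : HasDerivAt (fun a : ℝ => φf (L a) * lam ^ 2 * σε * σ * ψ / (1 + lam * σ * ψ))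
        (-(L a) * φf (L a) * c0 * lam ^ 2 * σε * σ * ψ / (1 + lam * σ * ψ)) a := by
      exact ((((hφL.mul_const (lam ^ 2)).mul_const σε).mul_const σ).mul_const ψ).div_const
        (1 + lam * σ * ψ)
    have hmain := (t1.add t2).sub t3
    have hfn : HasDerivAt h ((1 + lam * σ) / (1 + lam * σ * ψ)
        + (pdf (L a) * c0 * ((1 + lam * σ) * lam * σ * ψ / (1 + lam * σ * ψ) * a + lam * σ * μ)
          + Φf (L a) * ((1 + lam * σ) * lam * σ * ψ / (1 + lam * σ * ψ)))
        - -(L a) * φf (L a) * c0 * lam ^ 2 * σε * σ * ψ / (1 + lam * σ * ψ)) a :=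
      hmain.congr_of_eventuallyEq (Filter.Eventually.of_forall fun x => hh x)
    refine hfn.congr_deriv ?_
    rw [hg a, hφ (L a), hL a, hc0]
    simp only [hpdf]
    field_simp
    ring
  -- continuity of g and h
  have hgcont : Continuous g := by
    rw [show g = fun a => lam * σ * (1 - ψ) / (1 + lam * σ * ψ)
      + Φf (L a) * (lam * σ * ψ * (1 + lam * σ) / (1 + lam * σ * ψ)) from funext hg]
    exact continuous_const.add ((hΦcont.comp hLcont).mul continuous_const)
  have hhcont : Continuous h := continuous_iff_continuousAt.2 fun x => (hd x).continuousAt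
  -- strict antitonicity of g
  have hLanti : ∀ x y : ℝ, x < y → L y < L x := by
    intro x y hxy
    rw [hL x, hL y]
    have := mul_pos (mul_pos hslinv h1ls) (sub_pos.2 hxy)
    nlinarith
  have hganti : StrictAnti g := by
    intro x y hxy
    rw [hg x, hg y]
    have h1 := hΦmono (hLanti x y hxy)
    have h2 : (0:ℝ) < lam * σ * ψ * (1 + lam * σ) / (1 + lam * σ * ψ) := by positivity
    nlinarith
  -- limits of g
  have hLbot : Tendsto L atBot atTop := by
    have h1 : Tendsto (fun a : ℝ => c0 * a) atBot atTop :=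
      (tendsto_const_mul_atTop_of_neg hc0neg).2 tendsto_id
    have h2 : Tendsto (fun a : ℝ => c0 * a
        + (σε * lam)⁻¹ * (-μ / ψ - lam * σ * μ)) atBot atTop :=
      tendsto_atTop_add_const_right _ _ h1
    refine h2.congr fun a => ?_
    rw [hL a, hc0]; ring
  have hLtop : Tendsto L atTop atBot := by
    have h1 : Tendsto (fun a : ℝ => c0 * a) atTop atBot :=
      (tendsto_const_mul_atBot_of_neg hc0neg).2 tendsto_id
    have h2 : Tendsto (fun a : ℝ => c0 * a
        + (σε * lam)⁻¹ * (-μ / ψ - lam * σ * μ)) atTop atBot :=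
      tendsto_atBot_add_const_right _ _ h1
    refine h2.congr fun a => ?_
    rw [hL a, hc0]; ring
  have hgbot : Tendsto g atBot (𝓝 (lam * σ * (1 - ψ) / (1 + lam * σ * ψ)
      + 1 * (lam * σ * ψ * (1 + lam * σ) / (1 + lam * σ * ψ)))) := by
    have h1 : Tendsto (fun a => Φf (L a)) atBot (𝓝 1) := hΦtop.comp hLbot
    have h2 : Tendsto (fun a => lam * σ * (1 - ψ) / (1 + lam * σ * ψ)
        + Φf (L a) * (lam * σ * ψ * (1 + lam * σ) / (1 + lam * σ * ψ))) atBot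
        (𝓝 (lam * σ * (1 - ψ) / (1 + lam * σ * ψ)
          + 1 * (lam * σ * ψ * (1 + lam * σ) / (1 + lam * σ * ψ)))) :=
      tendsto_const_nhds.add (h1.mul tendsto_const_nhds)
    exact h2.congr fun a => (hg a).symm
  have hgtop : Tendsto g atTop (𝓝 (lam * σ * (1 - ψ) / (1 + lam * σ * ψ)
      + 0 * (lam * σ * ψ * (1 + lam * σ) / (1 + lam * σ * ψ)))) := by
    have h1 : Tendsto (fun a => Φf (L a)) atTop (𝓝 0) := hΦbot.comp hLtop
    have h2 : Tendsto (fun a => lam * σ * (1 - ψ) / (1 + lam * σ * ψ)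
        + Φf (L a) * (lam * σ * ψ * (1 + lam * σ) / (1 + lam * σ * ψ))) atTop
        (𝓝 (lam * σ * (1 - ψ) / (1 + lam * σ * ψ)
          + 0 * (lam * σ * ψ * (1 + lam * σ) / (1 + lam * σ * ψ)))) :=
      tendsto_const_nhds.add (h1.mul tendsto_const_nhds)
    exact h2.congr fun a => (hg a).symm
  have hlimbot : lam * σ * (1 - ψ) / (1 + lam * σ * ψ)
      + 1 * (lam * σ * ψ * (1 + lam * σ) / (1 + lam * σ * ψ)) = lam * σ := by
    field_simp; ring
  have hlimtop : lam * σ * (1 - ψ) / (1 + lam * σ * ψ)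
      + 0 * (lam * σ * ψ * (1 + lam * σ) / (1 + lam * σ * ψ)) < 0 := by
    rw [zero_mul, add_zero]
    apply div_neg_of_neg_of_pos _ hden
    nlinarith
  obtain ⟨a1, hga1⟩ : ∃ a, 0 < g a := by
    rw [hlimbot] at hgbot
    exact (hgbot.eventually (eventually_gt_nhds hls)).exists
  obtain ⟨a2, hga2⟩ : ∃ a, g a < 0 :=
    (hgtop.eventually (eventually_lt_nhds hlimtop)).exists
  have ha12 : a1 < a2 := by
    by_contra hc
    push_neg at hc
    have := hganti.antitone hc
    linarith
  obtain ⟨astar0, _, hstar0⟩ : ∃ x ∈ Icc a1 a2, g x = 0 := by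
    have := intermediate_value_Icc' (le_of_lt ha12) (hgcont.continuousOn)
    exact this ⟨le_of_lt hga2, le_of_lt hga1⟩
  have huniq : ∃! astar : ℝ, g astar = 0 :=
    ⟨astar0, hstar0, fun b hb => hganti.injective (by rw [hb, hstar0])⟩
  refine ⟨hd, hganti, huniq, ?_⟩
  -- part 4
  intro astar hstar
  have hgpos : ∀ x, x < astar → 0 < g x := fun x hx => hstar ▸ hganti hx
  have hgneg : ∀ x, astar < x → g x < 0 := fun x hx => hstar ▸ hganti hx
  set F : ℝ → ℝ := fun x => h x - x with hF
  have hF' : ∀ x, HasDerivAt F (g x) x := by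
    intro x
    have := (hd x).sub (hasDerivAt_id x)
    refine this.congr_deriv ?_; ring
  have hFcont : Continuous F := hhcont.sub continuous_id
  have hFmono : StrictMonoOn F (Iic astar) := by
    refine strictMonoOn_of_deriv_pos (convex_Iic astar) hFcont.continuousOn fun x hx => ?_
    rw [interior_Iic] at hx
    rw [(hF' x).deriv]
    exact hgpos x hx
  have hFanti : StrictAntiOn F (Ici astar) := by
    refine strictAntiOn_of_deriv_neg (convex_Ici astar) hFcont.continuousOn fun x hx => ?_
    rw [interior_Ici] at hx
    rw [(hF' x).deriv]
    exact hgneg x hx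
  have hSF : {x : ℝ | h x = x} = {x : ℝ | F x = 0} := by
    ext x; simp [hF, sub_eq_zero]
  -- finiteness
  have hsplit : {x : ℝ | F x = 0} ⊆ ({x | F x = 0} ∩ Iic astar) ∪ ({x | F x = 0} ∩ Ici astar) := by
    intro x hx
    rcases le_total x astar with hle | hle
    · exact Or.inl ⟨hx, hle⟩
    · exact Or.inr ⟨hx, hle⟩
  have hsub1 : ({x : ℝ | F x = 0} ∩ Iic astar).Subsingleton := by
    intro x hx y hy
    exact hFmono.injOn hx.2 hy.2 (by rw [hx.1, hy.1])
  have hsub2 : ({x : ℝ | F x = 0} ∩ Ici astar).Subsingleton := by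
    intro x hx y hy
    exact hFanti.injOn hx.2 hy.2 (by rw [hx.1, hy.1])
  have hfin : {x : ℝ | h x = x}.Finite := by
    rw [hSF]
    exact ((hsub1.finite.union hsub2.finite).subset hsplit)
  have hcard1 : ∀ s : Set ℝ, s.Subsingleton → s.ncard ≤ 1 := by
    intro s hs
    rcases hs.eq_empty_or_singleton with rfl | ⟨a, rfl⟩ <;> simp
  have hncard : {x : ℝ | h x = x}.ncard ≤ 2 := by
    rw [hSF]
    calc {x : ℝ | F x = 0}.ncard
        ≤ (({x | F x = 0} ∩ Iic astar) ∪ ({x | F x = 0} ∩ Ici astar)).ncard :=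
          Set.ncard_le_ncard hsplit (hsub1.finite.union hsub2.finite)
      _ ≤ ({x : ℝ | F x = 0} ∩ Iic astar).ncard + ({x : ℝ | F x = 0} ∩ Ici astar).ncard :=
          Set.ncard_union_le _ _
      _ ≤ 1 + 1 := add_le_add (hcard1 _ hsub1) (hcard1 _ hsub2)
      _ = 2 := by norm_num
  -- max value at astar
  have hFmax : ∀ x, F x = 0 → 0 ≤ F astar := by
    intro x hx
    rcases le_total x astar with hle | hle
    · have := hFmono.monotoneOn (mem_Iic.2 hle) (mem_Iic.2 le_rfl) hle
      linarith [hx ▸ this]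
    · have := hFanti.antitoneOn (mem_Ici.2 le_rfl) (mem_Ici.2 hle) hle
      linarith [hx ▸ this]
  have ha1star : a1 < astar := by
    by_contra hc
    push_neg at hc
    have := hganti.antitone hc
    rw [hstar] at this
    linarith
  have ha2star : astar < a2 := by
    by_contra hc
    push_neg at hc
    have := hganti.antitone hc
    rw [hstar] at this
    linarith
  -- lower bound via MVT to the left
  have hleft : 0 ≤ F astar → ∃ x, x ≤ astar ∧ F x = 0 ∧ (0 < F astar → x < astar) := by
    intro hFa
    set M : ℝ := max (F a1) 0 + 1 with hM
    have hMpos : 0 < M := by positivity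
    set x0 : ℝ := a1 - M / g a1 with hx0
    have hx0lt : x0 < a1 := by
      have := div_pos hMpos hga1
      rw [hx0]; linarith
    obtain ⟨cc, hcc, hslope⟩ := exists_hasDerivAt_eq_slope F g hx0lt
      hFcont.continuousOn (fun y _ => hF' y)
    have hgcc : g a1 < g cc := hganti hcc.2
    have hFx0 : F x0 ≤ -1 := by
      have hpos : 0 < a1 - x0 := by linarith
      have h1 : g a1 * (a1 - x0) ≤ F a1 - F x0 := by
        have h2 : F a1 - F x0 = g cc * (a1 - x0) := by
          rw [hslope]; field_simp
        rw [h2]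
        exact mul_le_mul_of_nonneg_right (le_of_lt hgcc) (le_of_lt hpos)
      have h3 : a1 - x0 = M / g a1 := by rw [hx0]; ring
      have h4 : g a1 * (M / g a1) = M := by field_simp
      rw [h3, h4] at h1
      have h5 : F a1 ≤ max (F a1) 0 := le_max_left _ _
      rw [hM] at h1
      linarith
    have hx0star : x0 ≤ astar := by linarith
    obtain ⟨x, hxmem, hFx⟩ : ∃ x ∈ Icc x0 astar, F x = 0 := by
      have := intermediate_value_Icc hx0star hFcont.continuousOn
      exact this ⟨by linarith, hFa⟩
    refine ⟨x, hxmem.2, hFx, fun hlt => ?_⟩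
    rcases lt_or_eq_of_le hxmem.2 with h | h
    · exact h
    · rw [h] at hFx; linarith
  refine ⟨⟨hfin, hncard⟩, ?_, ?_⟩
  · constructor
    · rintro ⟨x, hx⟩
      have : F x = 0 := by simp only [hF]; simp [hx]
      have := hFmax x this
      simp only [hF] at this; linarith
    · intro hle
      have hFa : 0 ≤ F astar := by simp only [hF]; linarith
      obtain ⟨x, _, hFx, _⟩ := hleft hFa
      exact ⟨x, by have := hFx; simp only [hF] at this; linarith⟩
  · intro hlt
    have hFa : 0 < F astar := by simp only [hF]; linarith
    obtain ⟨x, hxle, hFx, hxlt⟩ := hleft (le_of_lt hFa)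
    have hxs : x < astar := hxlt hFa
    -- right zero via MVT
    set M : ℝ := max (F a2) 0 + 1 with hM
    have hMpos : 0 < M := by positivity
    set x1 : ℝ := a2 + M / (-g a2) with hx1
    have hx1gt : a2 < x1 := by
      have := div_pos hMpos (by linarith : (0:ℝ) < -g a2)
      rw [hx1]; linarith
    obtain ⟨cc, hcc, hslope⟩ := exists_hasDerivAt_eq_slope F g hx1gt
      hFcont.continuousOn (fun y _ => hF' y)
    have hgcc : g cc < g a2 := hganti hcc.1
    have hFx1 : F x1 ≤ -1 := by
      have hpos : 0 < x1 - a2 := by linarith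
      have h1 : F x1 - F a2 ≤ g a2 * (x1 - a2) := by
        have h2 : F x1 - F a2 = g cc * (x1 - a2) := by
          rw [hslope]; field_simp
        rw [h2]
        exact mul_le_mul_of_nonneg_right (le_of_lt hgcc) (le_of_lt hpos)
      have h3 : x1 - a2 = M / (-g a2) := by rw [hx1]; ring
      have h4 : g a2 * (M / (-g a2)) = -M := by
        have hne : g a2 ≠ 0 := ne_of_lt hga2
        field_simp
      rw [h3, h4] at h1
      have h5 : F a2 ≤ max (F a2) 0 := le_max_left _ _
      rw [hM] at h1
      linarith
    have hstarx1 : astar ≤ x1 := by linarith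
    obtain ⟨y, hymem, hFy⟩ : ∃ y ∈ Icc astar x1, F y = 0 := by
      have := intermediate_value_Icc' hstarx1 hFcont.continuousOn
      exact this ⟨by linarith, le_of_lt hFa⟩
    have hys : astar < y := by
      rcases lt_or_eq_of_le hymem.1 with hy | hy
      · exact hy
      · rw [← hy] at hFy; linarith
    refine ⟨x, y, ne_of_lt (lt_trans hxs hys), ?_, ?_⟩
    · simp only [hF] at hFx; linarith
    · simp only [hF] at hFy; linarith
end

section
/- Let 0 < M, M_f, N ≤ 1, β ∈ (0,1), λ, σ > 0, p, q ∈ (0,1], a = λσ, ρ = p+q−1, and suppose δ := (M−1)(1−M_f β) + aN < 0. Then: (i) det(I₂ − (M + M_f β + aN)K + βMM_f K²) = −δ(−δ + (1−ρ)(M + aN + M_f β(1 − M(p+q)))) > 0; and (ii) det(I₂ − (M + M_f β + aN)K + βMM_f K² + aψ e₂e₂ᵀ) > 0 for every ψ > 1, where K = [[p, 1−p],[1−q, q]] and e₂ = (0,1)ᵀ. -/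
set_option maxHeartbeats 1000000 in
/-- With δ = (M−1)(1−M_fβ) + aN < 0, for
Q = I − (M + M_fβ + aN)K + βMM_fK²: (i) det Q = −δ(−δ + (1−ρ)(M + aN + M_fβ(1−M(p+q)))) > 0;
(ii) det(Q + aψ·e₂e₂ᵀ) > 0 for every ψ > 1. -/
theorem stmt17 (M Mf N β lam σ p q : ℝ)
    (hM : 0 < M ∧ M ≤ 1) (hMf : 0 < Mf ∧ Mf ≤ 1) (hN : 0 < N ∧ N ≤ 1)
    (hβ0 : 0 < β) (hβ1 : β < 1) (hlam : 0 < lam) (hσ : 0 < σ)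
    (hp : 0 < p ∧ p ≤ 1) (hq : 0 < q ∧ q ≤ 1)
    (a ρ δ : ℝ) (ha : a = lam * σ) (hρ : ρ = p + q - 1)
    (hδ : δ = (M - 1) * (1 - Mf * β) + a * N) (hδneg : δ < 0)
    (K Q : Matrix (Fin 2) (Fin 2) ℝ)
    (hK : K = !![p, 1 - p; 1 - q, q])
    (hQ : Q = 1 - (M + Mf * β + a * N) • K + (β * M * Mf) • (K * K)) :
    (Q.det = -δ * (-δ + (1 - ρ) * (M + a * N + Mf * β * (1 - M * (p + q)))) ∧ 0 < Q.det) ∧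
    (∀ ψ : ℝ, 1 < ψ →
      0 < (Q + (a * ψ) • (!![0, 0; 0, 1] : Matrix (Fin 2) (Fin 2) ℝ)).det) := by
  obtain ⟨hM0, hM1⟩ := hM
  obtain ⟨hMf0, hMf1⟩ := hMf
  obtain ⟨hN0, hN1⟩ := hN
  obtain ⟨hp0, hp1⟩ := hp
  obtain ⟨hq0, hq1⟩ := hq
  have ha0 : 0 < a := by rw [ha]; positivity
  have hδ' : 0 < -δ := by linarith
  have hB0 : 0 < β * M * Mf := by positivity
  have hMfβ : Mf * β < 1 := by nlinarith
  have hB1 : β * M * Mf < 1 := by nlinarith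
  set S := M + Mf * β + a * N with hS
  set B := β * M * Mf with hBdef
  -- explicit form of Q
  have hQ' : Q = !![1 - S * p + B * (p * p + (1 - p) * (1 - q)),
                    -(S * (1 - p)) + B * ((1 - p) * (p + q));
                    -(S * (1 - q)) + B * ((1 - q) * (p + q)),
                    1 - S * q + B * ((1 - p) * (1 - q) + q * q)] := by
    subst hK hQ
    ext i j
    fin_cases i <;> fin_cases j <;>
      simp only [Matrix.add_apply, Matrix.sub_apply, Matrix.smul_apply, smul_eq_mul, Fin.mk_zero, Fin.mk_one, reduceIte, Fin.reduceEq,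
        Matrix.mul_apply, Fin.sum_univ_two, Matrix.one_apply, Matrix.cons_val', Matrix.cons_val_zero,
        Matrix.cons_val_one, Matrix.head_cons, Matrix.head_fin_const, Matrix.empty_val',
        Matrix.cons_val_fin_one, Fin.isValue, Matrix.one_apply_eq, Matrix.one_apply_ne,
        Matrix.of_apply] <;> ring1
  -- key positivity: T > 0
  have hT : 0 < M + a * N + Mf * β * (1 - M * (p + q)) := by
    nlinarith [mul_pos ha0 hN0,
      mul_nonneg hM0.le (by linarith : (0:ℝ) ≤ 1 - Mf * β),
      mul_nonneg (mul_nonneg hMf0.le hβ0.le) (by linarith : (0:ℝ) ≤ 1 - M),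
      mul_nonneg (mul_nonneg (mul_nonneg hMf0.le hβ0.le) hM0.le)
        (by linarith : (0:ℝ) ≤ 2 - p - q)]
  have hdet : Q.det = -δ * (-δ + (1 - ρ) * (M + a * N + Mf * β * (1 - M * (p + q)))) := by
    rw [hQ', Matrix.det_fin_two_of, hS, hBdef, hρ, hδ]
    ring
  have hρ2 : 0 ≤ 1 - ρ := by rw [hρ]; linarith
  have hdetpos : 0 < Q.det := by
    rw [hdet]
    have : 0 < -δ + (1 - ρ) * (M + a * N + Mf * β * (1 - M * (p + q))) := by positivity
    positivity
  refine ⟨⟨hdet, hdetpos⟩, ?_⟩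
  intro ψ hψ
  have hQ11 : 0 < Q 0 0 := by
    have h0 : Q 0 0 = (1 - p) * (1 - B * p) + p * (-δ) + B * ((1 - p) * (1 - q)) := by
      rw [hQ']
      have : (1 + B) - S = -δ := by rw [hS, hBdef, hδ]; ring
      simp
      nlinarith [this]
    rw [h0]
    have h1 : 0 ≤ (1 - p) * (1 - B * p) := by
      apply mul_nonneg (by linarith); nlinarith
    nlinarith [mul_pos hp0 hδ',
      mul_nonneg hB0.le (mul_nonneg (by linarith : (0:ℝ) ≤ 1 - p) (by linarith : (0:ℝ) ≤ 1 - q))]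
  have hdet2 : (Q + (a * ψ) • (!![0, 0; 0, 1] : Matrix (Fin 2) (Fin 2) ℝ)).det
      = Q.det + (a * ψ) * Q 0 0 := by
    rw [hQ']
    rw [show (!![1 - S * p + B * (p * p + (1 - p) * (1 - q)),
                    -(S * (1 - p)) + B * ((1 - p) * (p + q));
                    -(S * (1 - q)) + B * ((1 - q) * (p + q)),
                    1 - S * q + B * ((1 - p) * (1 - q) + q * q)] : Matrix (Fin 2) (Fin 2) ℝ)
          + (a * ψ) • (!![0, 0; 0, 1] : Matrix (Fin 2) (Fin 2) ℝ)
        = !![1 - S * p + B * (p * p + (1 - p) * (1 - q)),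
                    -(S * (1 - p)) + B * ((1 - p) * (p + q));
                    -(S * (1 - q)) + B * ((1 - q) * (p + q)),
                    1 - S * q + B * ((1 - p) * (1 - q) + q * q) + a * ψ] from by
      ext i j; fin_cases i <;> fin_cases j <;> simp]
    rw [Matrix.det_fin_two_of, Matrix.det_fin_two_of]
    simp [Matrix.cons_val_zero]
    ring
  rw [hdet2]
  have haψ : 0 < a * ψ := by positivity
  nlinarith [mul_pos haψ hQ11]
end

section
/- Let λ, σ > 0, β ∈ (0,1), ψ > 1, q̄ ∈ (0,1), a = λσ. Define ε^PP,RPE − ε^ZP,RPE₂ = v·(q̄(1+a)ψ − 1 − aψ) where v = a(λε₂ψ + aμ(ψ−1)) / (λ(1−q̄)ψ(a+1)(a(ψ−q̄) + 1−q̄)) with μ > 0, ε₂ ≥ 0, and λε₂ψ + aμ(ψ−1) > 0. Then v > 0, and hence ε^PP,RPE > ε^ZP,RPE₂ if and only if q̄(1+a)ψ > 1 + aψ; i.e., the E-stability condition of the ZP restricted perceptions equilibrium is equivalent to the PP-existence threshold exceeding the ZP-existence threshold, so that an E-stable ZP RPE and a PP RPE cannot coexist. -/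
/-- With v = a(λε₂ψ + aμ(ψ−1)) / (λ(1−q̄)ψ(a+1)(a(ψ−q̄)+1−q̄)) > 0 and
ε^PP,RPE − ε^ZP,RPE₂ = v·(q̄(1+a)ψ − 1 − aψ), we have ε^PP,RPE > ε^ZP,RPE₂ iff
q̄(1+a)ψ > 1 + aψ, i.e. the E-stability condition for the ZP RPE; so an E-stable ZP RPE
and a PP RPE cannot coexist. -/
theorem stmt18 (lam σ β ψ qbar μ ε₂ : ℝ) (hlam : 0 < lam) (hσ : 0 < σ)
    (hβ0 : 0 < β) (hβ1 : β < 1) (hψ : 1 < ψ) (hq0 : 0 < qbar) (hq1 : qbar < 1)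
    (hμ : 0 < μ) (hε₂ : 0 ≤ ε₂)
    (a : ℝ) (ha : a = lam * σ)
    (hnum : 0 < lam * ε₂ * ψ + a * μ * (ψ - 1))
    (v εPP εZP : ℝ)
    (hv : v = a * (lam * ε₂ * ψ + a * μ * (ψ - 1)) /
      (lam * (1 - qbar) * ψ * (a + 1) * (a * (ψ - qbar) + 1 - qbar)))
    (hdiff : εPP - εZP = v * (qbar * (1 + a) * ψ - 1 - a * ψ)) :
    0 < v ∧ (εZP < εPP ↔ 1 + a * ψ < qbar * (1 + a) * ψ) := by
  have ha0 : 0 < a := ha ▸ mul_pos hlam hσ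
  have hden : 0 < lam * (1 - qbar) * ψ * (a + 1) * (a * (ψ - qbar) + 1 - qbar) := by
    have h1 : 0 < ψ - qbar := by linarith
    have h2 : 0 < a * (ψ - qbar) + 1 - qbar := by nlinarith
    have h3 : 0 < lam * (1 - qbar) * ψ * (a + 1) := by
      have : (0:ℝ) < 1 - qbar := by linarith
      have : (0:ℝ) < ψ := by linarith
      have : (0:ℝ) < a + 1 := by linarith
      positivity
    exact mul_pos h3 h2
  have hv0 : 0 < v := hv ▸ div_pos (mul_pos ha0 hnum) hden
  refine ⟨hv0, ?_⟩
  constructor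
  · intro h
    nlinarith [hdiff]
  · intro h
    nlinarith [mul_pos hv0 (by linarith : (0:ℝ) < qbar * (1 + a) * ψ - 1 - a * ψ)]
end

section
/- Let β ∈ (0,1), λ, σ > 0, ψ > 1, and consider the sequence a_j ∈ ℝ² defined by a_0 = Γ and a_j = A·a_{j−1} for j ≥ 1, where A = [[M, σN],[Mλ, M_f β + λσN]] with 0 < M, M_f, N ≤ 1, and Γ = (−σī, −λσī)ᵀ with ī < 0. If (M−1)(1−M_f β) + λσN < 0, then a_j → 0 as j → ∞; in particular both components of a_j remain bounded, so the time-0 effect of a forward-guidance rate cut T periods ahead, ∂π₀/∂ī = (A^T Γ)₂/ī, tends to 0 as T → ∞ (no forward guidance puzzle). Conversely, if M = M_f = N = 1, then (M−1)(1−M_f β) + λσN = λσ > 0, A has an eigenvalue strictly greater than 1, and |(A^T Γ)₂| → ∞ as T → ∞. -/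
open Polynomial in
lemma charpoly_fin_two' (a b c d : ℝ) : (!![a, b; c, d]).charpoly =
    X ^ 2 - C (a + d) * X + C (a*d - b*c) := by
  rw [Matrix.charpoly, Matrix.det_fin_two]
  simp [Matrix.charmatrix_apply]
  ring

/-- For the forward-guidance recursion a_j = A^j·Γ with
A = [[M, σN],[Mλ, M_fβ + λσN]] and Γ = (−σī, −λσī)ᵀ, ī < 0: if
(M−1)(1−M_fβ) + λσN < 0 then A^j·Γ → 0 (so components are bounded and
∂π₀/∂ī = (A^TΓ)₂/ī → 0: no forward guidance puzzle); conversely, if M = M_f = N = 1 then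
(M−1)(1−M_fβ) + λσN = λσ > 0, A has a real eigenvalue exceeding 1, and |(A^TΓ)₂| → ∞. -/
theorem stmt19 (β lam σ ψ M Mf N ibar : ℝ) (hβ0 : 0 < β) (hβ1 : β < 1)
    (hlam : 0 < lam) (hσ : 0 < σ) (hψ : 1 < ψ)
    (hM : 0 < M ∧ M ≤ 1) (hMf : 0 < Mf ∧ Mf ≤ 1) (hN : 0 < N ∧ N ≤ 1)
    (hibar : ibar < 0)
    (A : Matrix (Fin 2) (Fin 2) ℝ) (Γ : Fin 2 → ℝ)
    (hA : A = !![M, σ * N; M * lam, Mf * β + lam * σ * N])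
    (hΓ : Γ = ![-σ * ibar, -lam * σ * ibar]) :
    ((M - 1) * (1 - Mf * β) + lam * σ * N < 0 →
      Filter.Tendsto (fun j : ℕ => (A ^ j).mulVec Γ) Filter.atTop (nhds 0) ∧
      (∃ C : ℝ, ∀ (j : ℕ) (i : Fin 2), |((A ^ j).mulVec Γ) i| ≤ C) ∧
      Filter.Tendsto (fun T : ℕ => ((A ^ T).mulVec Γ) 1 / ibar) Filter.atTop (nhds 0)) ∧
    (M = 1 → Mf = 1 → N = 1 →
      (M - 1) * (1 - Mf * β) + lam * σ * N = lam * σ ∧ 0 < lam * σ ∧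
      (∃ z : ℝ, 1 < z ∧ A.charpoly.IsRoot z) ∧
      Filter.Tendsto (fun T : ℕ => |((A ^ T).mulVec Γ) 1|) Filter.atTop Filter.atTop) := by
  obtain ⟨hM0, hM1⟩ := hM
  obtain ⟨hMf0, hMf1⟩ := hMf
  obtain ⟨hN0, hN1⟩ := hN
  -- recursion formulas
  have hrec0 : ∀ j : ℕ, ((A ^ (j+1)).mulVec Γ) 0
      = M * ((A ^ j).mulVec Γ) 0 + (σ * N) * ((A ^ j).mulVec Γ) 1 := by
    intro j
    rw [pow_succ', ← Matrix.mulVec_mulVec, hA]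
    simp [Matrix.mulVec, dotProduct, Fin.sum_univ_two]
  have hrec1 : ∀ j : ℕ, ((A ^ (j+1)).mulVec Γ) 1
      = (M * lam) * ((A ^ j).mulVec Γ) 0
        + (Mf * β + lam * σ * N) * ((A ^ j).mulVec Γ) 1 := by
    intro j
    rw [pow_succ', ← Matrix.mulVec_mulVec, hA]
    simp [Matrix.mulVec, dotProduct, Fin.sum_univ_two]
  have hv00 : ((A ^ 0).mulVec Γ) 0 = -σ * ibar := by simp [hΓ]
  have hv01 : ((A ^ 0).mulVec Γ) 1 = -lam * σ * ibar := by simp [hΓ]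
  have hg0 : 0 < -σ * ibar := by
    have := mul_pos hσ (neg_pos.mpr hibar); linarith [this]
  have hg1 : 0 < -lam * σ * ibar := by
    have := mul_pos (mul_pos hlam hσ) (neg_pos.mpr hibar); linarith [this]
  constructor
  · -- stable case
    intro hcond
    set t : ℝ := M + Mf * β + lam * σ * N with ht
    set d : ℝ := M * Mf * β with hd
    have hMlsN : 0 < M * lam * σ * N := by positivity
    have hDnn : 0 ≤ t ^ 2 - 4 * d := by
      rw [ht, hd]
      linarith [sq_nonneg (M - (Mf * β + lam * σ * N)), hMlsN]
    set s : ℝ := Real.sqrt (t ^ 2 - 4 * d) with hs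
    have hs0 : 0 ≤ s := Real.sqrt_nonneg _
    have hs2 : s ^ 2 = t ^ 2 - 4 * d := Real.sq_sqrt hDnn
    have hs2' : s ^ 2 = (M + Mf * β + lam * σ * N) ^ 2 - 4 * (M * Mf * β) := by
      rw [hs2, ht, hd]
    clear_value t d s
    set ρ : ℝ := (t + s) / 2 with hρ
    have hρeq : ρ ^ 2 = (M + Mf * β + lam * σ * N) * ρ - M * Mf * β := by
      rw [hρ, ht]; linear_combination hs2' / 4
    -- ρ > M
    have hsqM : (2 * M - (M + Mf * β + lam * σ * N)) ^ 2 < s ^ 2 := by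
      linarith [hs2', hMlsN]
    have hsM : 2 * M - (M + Mf * β + lam * σ * N) < s :=
      lt_of_pow_lt_pow_left₀ 2 hs0 hsqM
    have hρM : M < ρ := by rw [hρ, ht]; linarith
    -- ρ < 1
    have hp1 : 0 < (1 - M) * (1 - Mf * β) - lam * σ * N := by linarith [hcond]
    have hmmfb : M * Mf * β < 1 := by
      have h1 : Mf * β ≤ β := mul_le_of_le_one_left hβ0.le hMf1
      have h2 : M * (Mf * β) ≤ Mf * β := mul_le_of_le_one_left (by positivity) hM1
      have h3 : M * (Mf * β) = M * Mf * β := by ring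
      linarith
    have ht2 : M + Mf * β + lam * σ * N < 2 := by linarith [hp1, hmmfb]
    have hsq1 : s ^ 2 < (2 - (M + Mf * β + lam * σ * N)) ^ 2 := by
      linarith [hs2', hp1]
    have hs1 : s < 2 - (M + Mf * β + lam * σ * N) :=
      lt_of_pow_lt_pow_left₀ 2 (by linarith) hsq1
    have hρ1 : ρ < 1 := by rw [hρ, ht]; linarith
    have hρ0 : 0 ≤ ρ := by
      have h1 : (0:ℝ) ≤ M + Mf * β + lam * σ * N := by positivity
      rw [hρ, ht]; linarith
    -- left Perron eigenvector (w1, w2)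
    set w1 : ℝ := M * lam with hw1
    set w2 : ℝ := ρ - M with hw2
    have hw1p : 0 < w1 := by rw [hw1]; positivity
    have hw2p : 0 < w2 := by rw [hw2]; linarith
    have heig1 : w1 * M + w2 * (M * lam) = ρ * w1 := by rw [hw1, hw2]; ring
    have heig2 : w1 * (σ * N) + w2 * (Mf * β + lam * σ * N) = ρ * w2 := by
      rw [hw1, hw2]; linear_combination -hρeq
    set S : ℝ := w1 * (-σ * ibar) + w2 * (-lam * σ * ibar) with hS
    clear_value ρ w1 w2 S
    have hSp : 0 < S := by
      rw [hS]
      have := mul_pos hw1p hg0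
      have := mul_pos hw2p hg1
      linarith
    -- key invariant
    have key : ∀ j : ℕ, 0 ≤ ((A ^ j).mulVec Γ) 0 ∧ 0 ≤ ((A ^ j).mulVec Γ) 1 ∧
        w1 * ((A ^ j).mulVec Γ) 0 + w2 * ((A ^ j).mulVec Γ) 1 = ρ ^ j * S := by
      intro j
      induction j with
      | zero =>
        refine ⟨by rw [hv00]; linarith, by rw [hv01]; linarith, ?_⟩
        rw [hv00, hv01, hS, pow_zero, one_mul]
      | succ n ih =>
        obtain ⟨h0, h1, hsum⟩ := ih
        refine ⟨?_, ?_, ?_⟩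
        · rw [hrec0]
          exact add_nonneg (mul_nonneg hM0.le h0) (mul_nonneg (by positivity) h1)
        · rw [hrec1]
          exact add_nonneg (mul_nonneg (by positivity) h0) (mul_nonneg (by positivity) h1)
        · rw [hrec0, hrec1, pow_succ]
          linear_combination ((A ^ n).mulVec Γ 0) * heig1 + ((A ^ n).mulVec Γ 1) * heig2
            + ρ * hsum + ((A ^ n).mulVec Γ 0 * w2) * hw1
    -- component bounds
    have hbound : ∀ j : ℕ, ((A ^ j).mulVec Γ) 0 ≤ ρ ^ j * (S / w1)
        ∧ ((A ^ j).mulVec Γ) 1 ≤ ρ ^ j * (S / w2) := by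
      intro j
      obtain ⟨h0, h1, hsum⟩ := key j
      constructor
      · have hkey : w1 * ((A ^ j).mulVec Γ) 0 ≤ ρ ^ j * S := by
          linarith [mul_nonneg hw2p.le h1]
        calc ((A ^ j).mulVec Γ) 0 ≤ (ρ ^ j * S) / w1 := by
              rw [le_div_iff₀ hw1p]; linarith [hkey]
          _ = ρ ^ j * (S / w1) := by ring
      · have hkey : w2 * ((A ^ j).mulVec Γ) 1 ≤ ρ ^ j * S := by
          linarith [mul_nonneg hw1p.le h0]
        calc ((A ^ j).mulVec Γ) 1 ≤ (ρ ^ j * S) / w2 := by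
              rw [le_div_iff₀ hw2p]; linarith [hkey]
          _ = ρ ^ j * (S / w2) := by ring
    have hgeo : ∀ C : ℝ, Filter.Tendsto (fun j : ℕ => ρ ^ j * C) Filter.atTop (nhds 0) := by
      intro C
      simpa using (tendsto_pow_atTop_nhds_zero_of_lt_one hρ0 hρ1).mul_const C
    have htend0 : Filter.Tendsto (fun j : ℕ => ((A ^ j).mulVec Γ) 0) Filter.atTop (nhds 0) :=
      squeeze_zero (fun j => (key j).1) (fun j => (hbound j).1) (hgeo (S / w1))
    have htend1 : Filter.Tendsto (fun j : ℕ => ((A ^ j).mulVec Γ) 1) Filter.atTop (nhds 0) :=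
      squeeze_zero (fun j => (key j).2.1) (fun j => (hbound j).2) (hgeo (S / w2))
    refine ⟨?_, ⟨S / w1 + S / w2, ?_⟩, ?_⟩
    · rw [tendsto_pi_nhds]
      intro i
      fin_cases i
      · simpa using htend0
      · simpa using htend1
    · intro j i
      have hρj : ρ ^ j ≤ 1 := pow_le_one₀ hρ0 (le_of_lt hρ1)
      have hd1 : 0 ≤ S / w1 := le_of_lt (div_pos hSp hw1p)
      have hd2 : 0 ≤ S / w2 := le_of_lt (div_pos hSp hw2p)
      fin_cases i
      · show |((A ^ j).mulVec Γ) 0| ≤ S / w1 + S / w2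
        rw [abs_of_nonneg (key j).1]
        calc ((A ^ j).mulVec Γ) 0 ≤ ρ ^ j * (S / w1) := (hbound j).1
          _ ≤ 1 * (S / w1) := mul_le_mul_of_nonneg_right hρj hd1
          _ ≤ S / w1 + S / w2 := by linarith
      · show |((A ^ j).mulVec Γ) 1| ≤ S / w1 + S / w2
        rw [abs_of_nonneg (key j).2.1]
        calc ((A ^ j).mulVec Γ) 1 ≤ ρ ^ j * (S / w2) := (hbound j).2
          _ ≤ 1 * (S / w2) := mul_le_mul_of_nonneg_right hρj hd2
          _ ≤ S / w1 + S / w2 := by linarith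
    · simpa using htend1.div_const ibar
  · -- unstable case
    intro hM' hMf' hN'
    subst hM' hMf' hN'
    have hDnn : 0 ≤ (1 + β + lam * σ) ^ 2 - 4 * β := by
      linarith [sq_nonneg (1 - β), mul_pos hlam hσ, mul_pos (mul_pos hlam hσ) hβ0,
        sq_nonneg (lam * σ)]
    set s : ℝ := Real.sqrt ((1 + β + lam * σ) ^ 2 - 4 * β) with hs
    have hs0 : 0 ≤ s := Real.sqrt_nonneg _
    have hs2 : s ^ 2 = (1 + β + lam * σ) ^ 2 - 4 * β := Real.sq_sqrt hDnn
    clear_value s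
    set z : ℝ := ((1 + β + lam * σ) + s) / 2 with hz
    have hsq : (2 - (1 + β + lam * σ)) ^ 2 < s ^ 2 := by
      linarith [hs2, mul_pos hlam hσ]
    have hz1 : 1 < z := by
      have := lt_of_pow_lt_pow_left₀ 2 hs0 hsq
      rw [hz]; linarith
    have hzeq : z ^ 2 = (1 + β + lam * σ) * z - β := by
      rw [hz]; linear_combination hs2 / 4
    clear_value z
    refine ⟨by ring, by positivity, ⟨z, hz1, ?_⟩, ?_⟩
    · -- z is a root of the characteristic polynomial
      rw [hA]
      have hAe : (!![(1:ℝ), σ * 1; 1 * lam, 1 * β + lam * σ * 1])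
          = !![(1:ℝ), σ; lam, β + lam * σ] := by norm_num
      rw [hAe, charpoly_fin_two']
      simp only [Polynomial.IsRoot, Polynomial.eval_add, Polynomial.eval_sub,
        Polynomial.eval_mul, Polynomial.eval_pow, Polynomial.eval_C, Polynomial.eval_X]
      linear_combination hzeq
    · -- divergence
      set ε : ℝ := min ((-σ * ibar) / σ) ((-lam * σ * ibar) / (z - 1)) with hε
      have hεp : 0 < ε := lt_min (div_pos hg0 hσ) (div_pos hg1 (by linarith))
      have key2 : ∀ T : ℕ, ε * z ^ T * σ ≤ ((A ^ T).mulVec Γ) 0 ∧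
          ε * z ^ T * (z - 1) ≤ ((A ^ T).mulVec Γ) 1 := by
        intro T
        induction T with
        | zero =>
          constructor
          · rw [hv00, pow_zero]
            have h1 := mul_le_mul_of_nonneg_right
              (min_le_left ((-σ * ibar) / σ) ((-lam * σ * ibar) / (z - 1))) hσ.le
            rw [div_mul_cancel₀ _ (ne_of_gt hσ)] at h1
            calc ε * 1 * σ = ε * σ := by ring
              _ ≤ -σ * ibar := h1
          · rw [hv01, pow_zero]
            have h1 := mul_le_mul_of_nonneg_right
              (min_le_right ((-σ * ibar) / σ) ((-lam * σ * ibar) / (z - 1)))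
              (show (0:ℝ) ≤ z - 1 by linarith)
            rw [div_mul_cancel₀ _ (show z - 1 ≠ 0 by linarith)] at h1
            calc ε * 1 * (z - 1) = ε * (z - 1) := by ring
              _ ≤ -lam * σ * ibar := h1
        | succ n ih =>
          obtain ⟨h0, h1⟩ := ih
          constructor
          · rw [hrec0]
            have hid0 : ε * z ^ (n+1) * σ
                = 1 * (ε * z ^ n * σ) + (σ * 1) * (ε * z ^ n * (z - 1)) := by
              rw [pow_succ]; ring
            rw [hid0]
            exact add_le_add (by linarith)
              (mul_le_mul_of_nonneg_left h1 (by positivity))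
          · rw [hrec1]
            have hid1 : ε * z ^ (n+1) * (z - 1)
                = (1 * lam) * (ε * z ^ n * σ)
                  + (1 * β + lam * σ * 1) * (ε * z ^ n * (z - 1)) := by
              rw [pow_succ]; linear_combination (ε * z ^ n) * hzeq
            rw [hid1]
            exact add_le_add (mul_le_mul_of_nonneg_left h0 (by positivity))
              (mul_le_mul_of_nonneg_left h1 (by positivity))
      have hlower : Filter.Tendsto (fun T : ℕ => ε * (z - 1) * z ^ T)
          Filter.atTop Filter.atTop :=
        (tendsto_pow_atTop_atTop_of_one_lt hz1).const_mul_atTop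
          (mul_pos hεp (by linarith))
      apply Filter.tendsto_atTop_mono _ hlower
      intro T
      calc ε * (z - 1) * z ^ T = ε * z ^ T * (z - 1) := by ring
        _ ≤ ((A ^ T).mulVec Γ) 1 := (key2 T).2
        _ ≤ |((A ^ T).mulVec Γ) 1| := le_abs_self _
end
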